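/- For any symmetric elements y₁,…,y_s, y'₁,…,y'_t ∈ A⁺ and skew-symmetric elements z₁, z₂ ∈ A⁻ of the algebra (A,*), the product y_{σ(1)}⋯y_{σ(s)} z₁ y'_{ρ(1)}⋯y'_{ρ(t)} z₂ is independent of the permutations σ ∈ S_s and ρ ∈ S_t: it equals y₁⋯y_s z₁ y'₁⋯y'_t z₂. -/

import Mathlib

section Aux

variable {K : Type*} [Field K]

/-- Structural facts preserved by products of upper-triangular matrices with
equal corner diagonal entries. -/
structure IsUp (M : Matrix (Fin 3) (Fin 3) K) : Prop where
  h10 : M 1 0 = 0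
  h20 : M 2 0 = 0
  h21 : M 2 1 = 0

lemma IsUp.one : IsUp (1 : Matrix (Fin 3) (Fin 3) K) :=
  ⟨by simp [Matrix.one_apply], by simp [Matrix.one_apply], by simp [Matrix.one_apply]⟩

lemma IsUp.mul {M N : Matrix (Fin 3) (Fin 3) K} (hM : IsUp M) (hN : IsUp N) :
    IsUp (M * N) := by
  obtain ⟨a,b,c⟩ := hM; obtain ⟨d,e,f⟩ := hN
  refine ⟨?_, ?_, ?_⟩ <;>
    simp [Matrix.mul_apply, Fin.sum_univ_three, a, b, c, d, e, f]

lemma IsUp.mul00 {M N : Matrix (Fin 3) (Fin 3) K} (hM : IsUp M) (hN : IsUp N) :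
    (M * N) 0 0 = M 0 0 * N 0 0 := by
  simp [Matrix.mul_apply, Fin.sum_univ_three, hN.h10, hN.h20]

lemma IsUp.mul11 {M N : Matrix (Fin 3) (Fin 3) K} (hM : IsUp M) (hN : IsUp N) :
    (M * N) 1 1 = M 1 1 * N 1 1 := by
  simp [Matrix.mul_apply, Fin.sum_univ_three, hM.h10, hN.h21]

lemma list_prod_up (l : List (Matrix (Fin 3) (Fin 3) K)) (h : ∀ M ∈ l, IsUp M) :
    IsUp l.prod ∧ l.prod 0 0 = (l.map fun M => M 0 0).prod
      ∧ l.prod 1 1 = (l.map fun M => M 1 1).prod := by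
  induction l with
  | nil => exact ⟨IsUp.one, by simp, by simp⟩
  | cons a l ih =>
    have ha : IsUp a := h a (by simp)
    obtain ⟨h1, h2, h3⟩ := ih (fun M hM => h M (by simp [hM]))
    exact ⟨ha.mul h1, by simp [ha.mul00 h1, h2], by simp [ha.mul11 h1, h3]⟩

lemma key (P Q : Matrix (Fin 3) (Fin 3) K) (a₁ a₂ : K)
    (hP : IsUp P) (hQ : IsUp Q) :
    P * !![0,a₁,0;0,0,-a₁;0,0,0] * Q * !![0,a₂,0;0,0,-a₂;0,0,0]
      = !![0,0,-(a₁*a₂)*(P 0 0 * Q 1 1); 0,0,0; 0,0,0] := by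
  obtain ⟨p1, p2, p3⟩ := hP; obtain ⟨q1, q2, q3⟩ := hQ
  ext i j
  fin_cases i <;> fin_cases j <;>
    simp [Matrix.mul_apply, Fin.sum_univ_three, Matrix.vecHead, Matrix.vecTail,
      p1, p2, p3, q1, q2, q3] <;> ring

end Aux

/-- For symmetric `y₁,…,y_s, y'₁,…,y'_t ∈ A⁺` and skew `z₁, z₂ ∈ A⁻`, the product
`y_{σ(1)}⋯y_{σ(s)} z₁ y'_{ρ(1)}⋯y'_{ρ(t)} z₂` does not depend on the
permutations `σ, ρ`. -/
theorem stmt_16 (K : Type*) [Field K]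
    (Aplus Aminus : Set (Matrix (Fin 3) (Fin 3) K))
    (hAp : Aplus = {M | ∃ d a c g : K, M = !![d, a, c; 0, g, a; 0, 0, d]})
    (hAm : Aminus = {M | ∃ a : K, M = !![0, a, 0; 0, 0, -a; 0, 0, 0]})
    (s t : ℕ) (Y : Fin s → Matrix (Fin 3) (Fin 3) K)
    (Y' : Fin t → Matrix (Fin 3) (Fin 3) K)
    (hY : ∀ i, Y i ∈ Aplus) (hY' : ∀ j, Y' j ∈ Aplus)
    (z₁ z₂ : Matrix (Fin 3) (Fin 3) K) (hz₁ : z₁ ∈ Aminus) (hz₂ : z₂ ∈ Aminus)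
    (σ : Equiv.Perm (Fin s)) (ρ : Equiv.Perm (Fin t)) :
    (List.ofFn fun i => Y (σ i)).prod * z₁ * (List.ofFn fun j => Y' (ρ j)).prod * z₂
      = (List.ofFn Y).prod * z₁ * (List.ofFn Y').prod * z₂ := by
  subst hAp hAm
  obtain ⟨a₁, rfl⟩ := hz₁
  obtain ⟨a₂, rfl⟩ := hz₂
  have hup : ∀ M : Matrix (Fin 3) (Fin 3) K,
      M ∈ {M | ∃ d a c g : K, M = !![d, a, c; 0, g, a; 0, 0, d]} → IsUp M := by
    rintro M ⟨d, a, c, g, rfl⟩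
    refine ⟨?_, ?_, ?_⟩ <;> simp [Matrix.vecHead, Matrix.vecTail]
  have hYup : ∀ i, IsUp (Y i) := fun i => hup _ (hY i)
  have hY'up : ∀ j, IsUp (Y' j) := fun j => hup _ (hY' j)
  have memY : ∀ {f : Fin s → Matrix (Fin 3) (Fin 3) K}, (∀ i, IsUp (f i)) →
      ∀ M ∈ List.ofFn f, IsUp M := by
    intro f hf M hM
    obtain ⟨i, rfl⟩ := List.mem_ofFn.1 hM
    exact hf i
  have memY' : ∀ {f : Fin t → Matrix (Fin 3) (Fin 3) K}, (∀ i, IsUp (f i)) →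
      ∀ M ∈ List.ofFn f, IsUp M := by
    intro f hf M hM
    obtain ⟨i, rfl⟩ := List.mem_ofFn.1 hM
    exact hf i
  obtain ⟨u1, u2, u3⟩ := list_prod_up (List.ofFn fun i => Y (σ i))
    (memY fun i => hYup (σ i))
  obtain ⟨v1, v2, v3⟩ := list_prod_up (List.ofFn Y) (memY hYup)
  obtain ⟨w1, w2, w3⟩ := list_prod_up (List.ofFn fun j => Y' (ρ j))
    (memY' fun j => hY'up (ρ j))
  obtain ⟨x1, x2, x3⟩ := list_prod_up (List.ofFn Y') (memY' hY'up)
  rw [key _ _ _ _ u1 w1, key _ _ _ _ v1 x1, u2, w3, v2, x3]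
  simp only [List.map_ofFn, List.prod_ofFn, Function.comp]
  rw [show (∏ i, Y (σ i) 0 0) = ∏ i, Y i 0 0 from Equiv.prod_comp σ (fun i => Y i 0 0),
    show (∏ j, Y' (ρ j) 1 1) = ∏ j, Y' j 1 1 from Equiv.prod_comp ρ (fun j => Y' j 1 1)]
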